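/- Suppose a countable group G acts by homeomorphisms on a compact metric space M, and μ is a probability measure on G such that M is μ-proximal. Then the μ-stationary Borel probability measure on M is unique. -/

import Mathlib

open MeasureTheory ProbabilityTheory Filter Topology Set
open scoped ENNReal NNReal Classical
set_option linter.unusedSectionVars false
set_option maxHeartbeats 1000000
/-- Position of the right random walk after `n` steps. -/
def walk {G Ω : Type*} [Group G] (X : ℕ → Ω → G) (ω : Ω) (n : ℕ) : G :=
  ((List.range n).map fun i => X i ω).prod

/-- `X` is a realization of the right random `μ`-walk increments. -/
def IsRW {G Ω : Type*} [Group G] [MeasurableSpace G] [MeasurableSpace Ω]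
    (μ : Measure G) (P : Measure Ω) (X : ℕ → Ω → G) : Prop :=
  (∀ i, Measurable (X i)) ∧ iIndepFun X P ∧
    ∀ i, Measure.map (X i) P = μ

/-- `ν` is `μ`-stationary: `μ * ν = ∑_g μ{g} · gν = ν`. -/
def Stationary {G M : Type*} [Group G] [MeasurableSpace G] [MulAction G M]
    [MeasurableSpace M] (μ : Measure G) (ν : Measure M) : Prop :=
  Measure.sum (fun g : G => μ {g} • Measure.map (fun x : M => g • x) ν) = ν

/-- Weak convergence of a sequence of measures to the point mass at `w`. -/
def TendstoPointMass {M : Type*} [TopologicalSpace M] [MeasurableSpace M]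
    (σ : ℕ → Measure M) (w : M) : Prop :=
  ∀ f : BoundedContinuousFunction M ℝ, Tendsto (fun i => ∫ x, f x ∂(σ i)) atTop (𝓝 (f w))

/-- `(M, ν)` is a `μ`-boundary: for a.e. path `τ` of the right random `μ`-walk the measures
`τ_i ν` converge weakly to a point mass. -/
def MuBoundary {G M : Type*} [Group G] [MeasurableSpace G] [MulAction G M]
    [MeasurableSpace M] [TopologicalSpace M] (μ : Measure G) (ν : Measure M) : Prop :=
  ∀ (Ω : Type) (_ : MeasurableSpace Ω) (P : Measure Ω), IsProbabilityMeasure P →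
    ∀ X : ℕ → Ω → G, IsRW μ P X →
      ∀ᵐ ω ∂P, ∃ w : M,
        TendstoPointMass (fun i => Measure.map (fun x : M => walk X ω i • x) ν) w

namespace RWC

variable {G : Type*} [Group G] [MeasurableSpace G] [MeasurableSingletonClass G] [Countable G]

lemma measG (s : Set G) : MeasurableSet s := (Set.to_countable s).measurableSet

variable (μ : Measure G) (e : G → ℕ)

noncomputable def q (n : ℕ) : ℝ≥0∞ := μ (e ⁻¹' {n})

noncomputable def c (n : ℕ) : ℝ := (∑ k ∈ Finset.range n, q μ e k).toReal

noncomputable def N (x : ℝ) : ℕ := sInf {n | x < c μ e (n + 1)}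

noncomputable def sig (n : ℕ) : G := if h : ∃ g, e g = n then h.choose else 1

noncomputable def X0 (x : ℝ) : G := sig e (N μ e x)

noncomputable def R (x : ℝ) : ℝ := (x - c μ e (N μ e x)) / (q μ e (N μ e x)).toReal

noncomputable def XX (i : ℕ) (x : ℝ) : G := X0 μ e ((R μ e)^[i] x)

variable [IsProbabilityMeasure μ]

lemma hqsum : ∑' n, q μ e n = 1 := by
  have hdisj : Pairwise (Function.onFun Disjoint fun n : ℕ => e ⁻¹' {n}) := by
    intro m n hmn
    exact Disjoint.preimage e (by simpa using hmn)
  have := measure_iUnion (μ := μ) hdisj (fun n => measG _)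
  have hU : (⋃ n, e ⁻¹' {n} : Set G) = univ := by
    ext g; simp only [mem_iUnion, mem_preimage, mem_singleton_iff, mem_univ, iff_true]
    exact ⟨e g, rfl⟩
  rw [hU] at this
  simpa [q, measure_univ] using this.symm

lemma partial_le_one (n : ℕ) : ∑ k ∈ Finset.range n, q μ e k ≤ 1 := by
  rw [← hqsum μ e]; exact ENNReal.sum_le_tsum _

lemma partial_ne_top (n : ℕ) : ∑ k ∈ Finset.range n, q μ e k ≠ ⊤ :=
  fun h => by simpa [h] using partial_le_one μ e n

lemma q_ne_top (n : ℕ) : q μ e n ≠ ⊤ := measure_ne_top μ _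

lemma c_mono : Monotone (c μ e) := by
  intro m n hmn
  apply ENNReal.toReal_mono (partial_ne_top μ e n)
  exact Finset.sum_le_sum_of_subset (Finset.range_subset_range.2 hmn)

lemma c_zero : c μ e 0 = 0 := by simp [c]

lemma c_nonneg (n : ℕ) : 0 ≤ c μ e n := ENNReal.toReal_nonneg

lemma c_le_one (n : ℕ) : c μ e n ≤ 1 := by
  have := partial_le_one μ e n
  have h := ENNReal.toReal_mono (by simp) this
  simpa [c] using h

lemma c_succ (n : ℕ) : c μ e (n + 1) = c μ e n + (q μ e n).toReal := by
  rw [c, Finset.sum_range_succ, ENNReal.toReal_add (partial_ne_top μ e n) (q_ne_top μ e n)]; rfl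

lemma c_tendsto : Tendsto (c μ e) atTop (𝓝 1) := by
  have h1 : Tendsto (fun n => ∑ k ∈ Finset.range n, q μ e k) atTop (𝓝 (∑' n, q μ e n)) :=
    ENNReal.tendsto_nat_tsum _
  rw [hqsum μ e] at h1
  have h2 := (ENNReal.tendsto_toReal (by simp : (1 : ℝ≥0∞) ≠ ⊤)).comp h1
  exact h2

lemma exists_lt (x : ℝ) (hx : x < 1) : ∃ n, x < c μ e (n + 1) := by
  have := (c_tendsto μ e).eventually_const_lt hx
  obtain ⟨n, hn⟩ := this.exists
  exact ⟨n, lt_of_lt_of_le hn (c_mono μ e (Nat.le_succ n))⟩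

lemma N_lt {x : ℝ} (hx : x < 1) : x < c μ e (N μ e x + 1) :=
  Nat.sInf_mem (exists_lt μ e x hx)

lemma N_le {x : ℝ} (hx0 : 0 ≤ x) : c μ e (N μ e x) ≤ x := by
  by_contra hlt
  push_neg at hlt
  cases' h : N μ e x with k
  · rw [h, c_zero] at hlt; exact absurd hlt (not_lt.2 hx0)
  · have hk : k < sInf {n | x < c μ e (n + 1)} := by
      rw [show sInf {n | x < c μ e (n + 1)} = N μ e x from rfl, h]; exact Nat.lt_succ_self k
    have hnm := Nat.notMem_of_lt_sInf hk
    rw [h] at hlt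
    exact hnm hlt

lemma N_eq_of_mem {x : ℝ} {n : ℕ} (hx : x ∈ Ico (c μ e n) (c μ e (n + 1))) : N μ e x = n := by
  obtain ⟨h1, h2⟩ := hx
  have hne : {m | x < c μ e (m + 1)}.Nonempty := ⟨n, h2⟩
  apply le_antisymm (Nat.sInf_le h2)
  by_contra hlt
  push_neg at hlt
  have hmem := Nat.sInf_mem hne
  have : c μ e (N μ e x + 1) ≤ c μ e n := c_mono μ e hlt
  exact absurd (lt_of_lt_of_le hmem this) (not_lt.2 h1)

lemma Ico_subset (n : ℕ) : Ico (c μ e n) (c μ e (n + 1)) ⊆ Ico (0 : ℝ) 1 :=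
  Ico_subset_Ico (c_nonneg μ e n) (c_le_one μ e (n + 1))

lemma cover : Ico (0 : ℝ) 1 = ⋃ n, Ico (c μ e n) (c μ e (n + 1)) := by
  apply Subset.antisymm
  · intro x hx
    exact mem_iUnion.2 ⟨N μ e x, N_le μ e hx.1, N_lt μ e hx.2⟩
  · exact iUnion_subset fun n => Ico_subset μ e n

lemma Ico_pairwise : Pairwise (Function.onFun Disjoint fun n : ℕ => Ico (c μ e n) (c μ e (n + 1))) := by
  have key : ∀ m n : ℕ, m < n →
      Disjoint (Ico (c μ e m) (c μ e (m+1))) (Ico (c μ e n) (c μ e (n+1))) := by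
    intro m n hmn
    apply Set.disjoint_left.2
    rintro x ⟨_, h2⟩ ⟨h3, _⟩
    exact absurd (lt_of_lt_of_le h2 (c_mono μ e hmn)) (not_lt.2 h3)
  intro m n hmn
  rcases lt_or_gt_of_ne hmn with h | h
  · exact key m n h
  · exact (key n m h).symm

lemma measurable_N : Measurable (N μ e) := by
  have hn : ∀ n : ℕ, {x : ℝ | N μ e x = n + 1} = Ico (c μ e (n+1)) (c μ e (n+2)) := by
    intro n
    ext x
    constructor
    · intro hx
      have hx' : N μ e x = n + 1 := hx
      have hne : {m | x < c μ e (m + 1)}.Nonempty := by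
        by_contra hemp
        rw [Set.not_nonempty_iff_eq_empty] at hemp
        have : N μ e x = 0 := by simp [N, hemp, Nat.sInf_empty]
        omega
      have hmem := Nat.sInf_mem hne
      have h2 : x < c μ e (n + 1 + 1) := by
        rw [show sInf {m | x < c μ e (m + 1)} = N μ e x from rfl, hx'] at hmem
        exact hmem
      have h3 : ¬ x < c μ e (n + 1) :=
        Nat.notMem_of_lt_sInf
          (show n < sInf {m | x < c μ e (m + 1)} by
            rw [show sInf {m | x < c μ e (m + 1)} = N μ e x from rfl, hx']; omega)
      exact ⟨not_lt.1 h3, h2⟩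
    · intro hx; exact N_eq_of_mem μ e hx
  have h0 : MeasurableSet {x : ℝ | N μ e x = 0} := by
    have : {x : ℝ | N μ e x = 0} = (⋃ n : ℕ, {x : ℝ | N μ e x = n + 1})ᶜ := by
      ext x
      simp only [mem_setOf_eq, mem_compl_iff, mem_iUnion, not_exists]
      constructor
      · intro h n hn; omega
      · intro h
        cases' hh : N μ e x with k
        · rfl
        · exact absurd hh (h k)
    rw [this]
    exact (MeasurableSet.iUnion fun n => by rw [hn n]; exact measurableSet_Ico).compl
  apply measurable_to_countable
  intro y
  have hpre : N μ e ⁻¹' {N μ e y} = {x | N μ e x = N μ e y} := by ext x; simp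
  rw [hpre]
  cases' h : N μ e y with k
  · exact h0
  · rw [hn k]; exact measurableSet_Ico


lemma measurable_R : Measurable (R μ e) := by
  have h1 : Measurable fun x => c μ e (N μ e x) :=
    (measurable_of_countable (fun n => c μ e n)).comp (measurable_N μ e)
  have h2 : Measurable fun x => (q μ e (N μ e x)).toReal :=
    (measurable_of_countable (fun n => (q μ e n).toReal)).comp (measurable_N μ e)
  exact (measurable_id.sub h1).div h2

lemma measurable_X0 : Measurable (X0 μ e) :=
  (measurable_of_countable _).comp (measurable_N μ e)

lemma measurable_XX (i : ℕ) : Measurable (XX μ e i) :=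
  (measurable_X0 μ e).comp ((measurable_R μ e).iterate i)

lemma q_pos {x : ℝ} (hx : x ∈ Ico (0:ℝ) 1) : 0 < (q μ e (N μ e x)).toReal := by
  have h1 := N_le μ e hx.1
  have h2 := N_lt μ e hx.2
  rw [c_succ] at h2
  linarith

lemma R_mem {x : ℝ} (hx : x ∈ Ico (0:ℝ) 1) : R μ e x ∈ Ico (0:ℝ) 1 := by
  have h1 := N_le μ e hx.1
  have h2 := N_lt μ e hx.2
  rw [c_succ] at h2
  have hq := q_pos μ e hx
  constructor
  · exact div_nonneg (by linarith) hq.le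
  · rw [R, div_lt_one hq]; linarith

lemma vol_affine {a b : ℝ} (ha : 0 < a) {A : Set ℝ} (mA : MeasurableSet A) :
    volume ((fun x => (x - b) / a) ⁻¹' A) = ENNReal.ofReal a * volume A := by
  have hcomp : (fun x : ℝ => (x - b) / a) = (fun y => a⁻¹ * y) ∘ (fun x => x + (-b)) := by
    funext x; simp [div_eq_inv_mul, sub_eq_add_neg]
  rw [hcomp, Set.preimage_comp]
  have hmul : volume ((fun y : ℝ => a⁻¹ * y) ⁻¹' A) = ENNReal.ofReal a * volume A := by
    have hmap := Real.map_volume_mul_left (a := a⁻¹) (by positivity)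
    have := congrArg (fun m : Measure ℝ => m A) hmap
    simp only [Measure.map_apply (measurable_const_mul _) mA, Measure.smul_apply,
      smul_eq_mul, inv_inv] at this
    rw [this, abs_of_pos ha]
  rw [← hmul]
  exact measure_preimage_add_right volume (-b) _

lemma sig_eq {g : G} {n : ℕ} (he : Function.Injective e) (hg : e g = n) : sig e n = g := by
  have hex : ∃ g', e g' = n := ⟨g, hg⟩
  rw [sig, dif_pos hex]
  exact he (hex.choose_spec.trans hg.symm)

lemma preim_eq {g : G} {n : ℕ} (he : Function.Injective e) (hg : e g = n) :
    e ⁻¹' {n} = {g} := by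
  ext g'; simp only [mem_preimage, mem_singleton_iff]
  constructor
  · intro h; exact he (h.trans hg.symm)
  · rintro rfl; exact hg

lemma preim_empty {n : ℕ} (hn : ¬ ∃ g, e g = n) : e ⁻¹' {n} = (∅ : Set G) := by
  ext g'; simp only [mem_preimage, mem_singleton_iff, mem_empty_iff_false, iff_false]
  exact fun h => hn ⟨g', h⟩

lemma key (he : Function.Injective e) (B : Set G) {A : Set ℝ} (mA : MeasurableSet A)
    (hA : A ⊆ Ico (0:ℝ) 1) :
    volume ((X0 μ e ⁻¹' B) ∩ (R μ e ⁻¹' A) ∩ Ico (0:ℝ) 1) = μ B * volume A := by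
  classical
  have hsplit : (X0 μ e ⁻¹' B) ∩ (R μ e ⁻¹' A) ∩ Ico (0:ℝ) 1
      = ⋃ n, (X0 μ e ⁻¹' B) ∩ (R μ e ⁻¹' A) ∩ Ico (c μ e n) (c μ e (n+1)) := by
    rw [cover μ e, Set.inter_iUnion]
  have hmeasn : ∀ n : ℕ,
      MeasurableSet ((X0 μ e ⁻¹' B) ∩ (R μ e ⁻¹' A) ∩ Ico (c μ e n) (c μ e (n+1))) :=
    fun n => (((measurable_X0 μ e) (measG B)).inter ((measurable_R μ e) mA)).inter
      measurableSet_Ico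
  have hdisj : Pairwise (Function.onFun Disjoint fun n : ℕ =>
      (X0 μ e ⁻¹' B) ∩ (R μ e ⁻¹' A) ∩ Ico (c μ e n) (c μ e (n+1))) := by
    intro m n hmn
    exact ((Ico_pairwise μ e hmn).mono inter_subset_right inter_subset_right)
  rw [hsplit, measure_iUnion hdisj hmeasn]
  have hterm : ∀ n : ℕ,
      volume ((X0 μ e ⁻¹' B) ∩ (R μ e ⁻¹' A) ∩ Ico (c μ e n) (c μ e (n+1)))
        = μ (e ⁻¹' {n} ∩ B) * volume A := by
    intro n
    by_cases hq : q μ e n = 0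
    · have hc : c μ e (n+1) = c μ e n := by rw [c_succ, hq]; simp
      have hqB : μ (e ⁻¹' {n} ∩ B) = 0 :=
        measure_mono_null (inter_subset_left) hq
      rw [hc, hqB]
      simp
    · have hex : ∃ g, e g = n := by
        by_contra hn
        exact hq (by rw [q, preim_empty e hn]; simp)
      obtain ⟨g, hg⟩ := hex
      have hsig : sig e n = g := sig_eq e he hg
      have hpre : e ⁻¹' {n} = {g} := preim_eq e he hg
      have hqpos : 0 < (q μ e n).toReal :=
        ENNReal.toReal_pos hq (q_ne_top μ e n)
      by_cases hgB : g ∈ B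
      · have hset : (X0 μ e ⁻¹' B) ∩ (R μ e ⁻¹' A) ∩ Ico (c μ e n) (c μ e (n+1))
            = (fun x => (x - c μ e n) / (q μ e n).toReal) ⁻¹' A := by
          ext x
          simp only [mem_inter_iff, mem_preimage]
          constructor
          · rintro ⟨⟨hX, hR⟩, hIco⟩
            have hN : N μ e x = n := N_eq_of_mem μ e hIco
            rw [R, hN] at hR
            exact hR
          · intro hx
            have hxA : (x - c μ e n) / (q μ e n).toReal ∈ Ico (0:ℝ) 1 := hA hx
            have hIco : x ∈ Ico (c μ e n) (c μ e (n+1)) := by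
              obtain ⟨ha1, ha2⟩ := hxA
              rw [div_lt_one hqpos] at ha2
              have ha1' : 0 ≤ x - c μ e n := by
                by_contra hcon
                push_neg at hcon
                have hneg := div_neg_of_neg_of_pos hcon hqpos
                linarith
              constructor
              · linarith
              · rw [c_succ]; linarith
            have hN : N μ e x = n := N_eq_of_mem μ e hIco
            refine ⟨⟨?_, ?_⟩, hIco⟩
            · rw [X0, hN, hsig]; exact hgB
            · rw [R, hN]; exact hx
        rw [hset, vol_affine hqpos mA, hpre]
        have : μ ({g} ∩ B) = q μ e n := by
          rw [Set.inter_eq_left.2 (by simpa using hgB), ← hpre]; rfl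
        rw [this, ENNReal.ofReal_toReal (q_ne_top μ e n)]
      · have hset : (X0 μ e ⁻¹' B) ∩ (R μ e ⁻¹' A) ∩ Ico (c μ e n) (c μ e (n+1)) = ∅ := by
          ext x
          simp only [mem_inter_iff, mem_preimage, mem_empty_iff_false, iff_false, not_and]
          rintro ⟨hX, hR⟩ hIco
          have hN : N μ e x = n := N_eq_of_mem μ e hIco
          rw [X0, hN, hsig] at hX
          exact hgB hX
        rw [hset, hpre]
        have : ({g} : Set G) ∩ B = ∅ := by
          ext g'; simp only [mem_inter_iff, mem_singleton_iff, mem_empty_iff_false, iff_false,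
            not_and]
          rintro rfl; exact hgB
        rw [this]
        simp
  simp_rw [hterm]
  rw [ENNReal.tsum_mul_right]
  congr 1
  have hdisj2 : Pairwise (Function.onFun Disjoint fun n : ℕ => e ⁻¹' {n} ∩ B) := by
    intro m n hmn
    exact ((Disjoint.preimage e (by simpa using hmn)).mono inter_subset_left inter_subset_left)
  rw [← measure_iUnion hdisj2 (fun n => measG _)]
  congr 1
  ext g
  simp only [mem_iUnion, mem_inter_iff, mem_preimage, mem_singleton_iff]
  constructor
  · rintro ⟨n, _, hB⟩; exact hB
  · intro hB; exact ⟨e g, rfl, hB⟩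


lemma R_preimage_inter {A : Set ℝ} :
    R μ e ⁻¹' (A ∩ Ico (0:ℝ) 1) ∩ Ico (0:ℝ) 1 = R μ e ⁻¹' A ∩ Ico (0:ℝ) 1 := by
  ext x
  simp only [mem_inter_iff, mem_preimage]
  constructor
  · rintro ⟨⟨h1, _⟩, h3⟩; exact ⟨h1, h3⟩
  · rintro ⟨h1, h3⟩; exact ⟨⟨h1, R_mem μ e h3⟩, h3⟩

lemma key' (he : Function.Injective e) (B : Set G) {A : Set ℝ} (mA : MeasurableSet A) :
    volume ((X0 μ e ⁻¹' B) ∩ (R μ e ⁻¹' A) ∩ Ico (0:ℝ) 1) = μ B * volume (A ∩ Ico (0:ℝ) 1) := by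
  have h := key μ e he B (mA.inter measurableSet_Ico) (inter_subset_right)
  rw [← h]
  congr 1
  rw [Set.inter_assoc, Set.inter_assoc, R_preimage_inter]

lemma vol_Ico01 : volume (Ico (0:ℝ) 1) = 1 := by simp

lemma R_mp (he : Function.Injective e) {A : Set ℝ} (mA : MeasurableSet A) :
    volume (R μ e ⁻¹' A ∩ Ico (0:ℝ) 1) = volume (A ∩ Ico (0:ℝ) 1) := by
  have h := key' μ e he univ mA
  simpa [measure_univ] using h

lemma X0_law (he : Function.Injective e) (B : Set G) :
    volume (X0 μ e ⁻¹' B ∩ Ico (0:ℝ) 1) = μ B := by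
  have h := key' μ e he B MeasurableSet.univ
  simp only [Set.univ_inter, Set.inter_univ, vol_Ico01, mul_one, Set.preimage_univ] at h
  exact h

lemma XX_succ (i : ℕ) (x : ℝ) : XX μ e (i+1) x = XX μ e i (R μ e x) := by
  rw [XX, XX, Function.iterate_succ_apply]

lemma XX_law (he : Function.Injective e) (i : ℕ) (B : Set G) :
    volume (XX μ e i ⁻¹' B ∩ Ico (0:ℝ) 1) = μ B := by
  induction i with
  | zero => exact X0_law μ e he B
  | succ n ih =>
    have hpre : XX μ e (n+1) ⁻¹' B = R μ e ⁻¹' (XX μ e n ⁻¹' B) := by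
      ext x; simp [XX_succ]
    rw [hpre, R_mp μ e he ((measurable_XX μ e n) (measG B)), ih]

lemma indep_core (he : Function.Injective e) :
    ∀ (n : ℕ) (S : Finset ℕ), S ⊆ Finset.range n → ∀ B : ℕ → Set G,
      volume ((⋂ i ∈ S, XX μ e i ⁻¹' B i) ∩ Ico (0:ℝ) 1) = ∏ i ∈ S, μ (B i) := by
  intro n
  induction n with
  | zero =>
    intro S hS B
    have : S = ∅ := Finset.subset_empty.1 (by simpa using hS)
    subst this
    simp [vol_Ico01]
  | succ n ih =>
    intro S hS B
    classical
    set S' : Finset ℕ := (S.erase 0).image (fun i => i - 1) with hS'def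
    have hS'sub : S' ⊆ Finset.range n := by
      intro j hj
      simp only [hS'def, Finset.mem_image, Finset.mem_erase] at hj
      obtain ⟨i, ⟨hi0, hiS⟩, rfl⟩ := hj
      have := Finset.mem_range.1 (hS hiS)
      simp only [Finset.mem_range]
      omega
    have hiter : (⋂ i ∈ S.erase 0, XX μ e i ⁻¹' B i)
        = R μ e ⁻¹' (⋂ j ∈ S', XX μ e j ⁻¹' B (j+1)) := by
      ext x
      simp only [mem_iInter, mem_preimage, Finset.mem_erase, hS'def, Finset.mem_image]
      constructor
      · rintro h j ⟨i, ⟨hi0, hiS⟩, rfl⟩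
        obtain ⟨k, rfl⟩ := Nat.exists_eq_succ_of_ne_zero hi0
        have := h (k+1) ⟨hi0, hiS⟩
        simpa [XX_succ] using this
      · intro h i ⟨hi0, hiS⟩
        obtain ⟨k, rfl⟩ := Nat.exists_eq_succ_of_ne_zero hi0
        have := h k ⟨k+1, ⟨hi0, hiS⟩, rfl⟩
        simpa [XX_succ] using this
    have hprod : ∏ i ∈ S.erase 0, μ (B i) = ∏ j ∈ S', μ (B (j+1)) := by
      rw [hS'def, Finset.prod_image]
      · apply Finset.prod_congr rfl
        intro i hi
        obtain ⟨hi0, -⟩ := Finset.mem_erase.1 hi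
        have hii : i - 1 + 1 = i := by omega
        rw [hii]
      · intro i hi j hj hij
        obtain ⟨hi0, -⟩ := Finset.mem_erase.1 hi
        obtain ⟨hj0, -⟩ := Finset.mem_erase.1 hj
        simp only at hij
        omega
    have hmeasT : MeasurableSet (⋂ j ∈ S', XX μ e j ⁻¹' B (j+1)) :=
      Finset.measurableSet_biInter _ (fun j _ => (measurable_XX μ e j) (measG _))
    by_cases h0 : 0 ∈ S
    · have hins : S = insert 0 (S.erase 0) := (Finset.insert_erase h0).symm
      have hsplit : (⋂ i ∈ S, XX μ e i ⁻¹' B i)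
          = (X0 μ e ⁻¹' B 0) ∩ (R μ e ⁻¹' (⋂ j ∈ S', XX μ e j ⁻¹' B (j+1))) := by
        rw [hins, Finset.set_biInter_insert, hiter]
        rfl
      rw [hsplit, key' μ e he (B 0) hmeasT, ih S' hS'sub (fun j => B (j+1)),
        hins, Finset.prod_insert (Finset.notMem_erase 0 S), hprod]
    · have herase : S.erase 0 = S := Finset.erase_eq_of_notMem h0
      have h1 : (⋂ i ∈ S, XX μ e i ⁻¹' B i)
          = R μ e ⁻¹' (⋂ j ∈ S', XX μ e j ⁻¹' B (j+1)) := by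
        rw [← herase]; exact hiter
      rw [h1, R_mp μ e he hmeasT, ih S' hS'sub (fun j => B (j+1)), ← hprod, herase]


lemma restrict_prob : IsProbabilityMeasure (volume.restrict (Ico (0:ℝ) 1)) := by
  constructor
  rw [Measure.restrict_apply MeasurableSet.univ]
  simp

lemma isRW (he : Function.Injective e) :
    IsRW μ (volume.restrict (Ico (0:ℝ) 1)) (XX μ e) := by
  refine ⟨measurable_XX μ e, ?_, ?_⟩
  · rw [iIndepFun_iff_measure_inter_preimage_eq_mul]
    intro S sets _
    obtain ⟨n, hn⟩ := S.exists_nat_subset_range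
    have hmeas : ∀ i : ℕ, MeasurableSet (XX μ e i ⁻¹' sets i) :=
      fun i => (measurable_XX μ e i) (measG _)
    rw [Measure.restrict_apply (Finset.measurableSet_biInter _ (fun i _ => hmeas i)),
      indep_core μ e he n S hn sets]
    apply Finset.prod_congr rfl
    intro i _
    rw [Measure.restrict_apply (hmeas i), XX_law μ e he i]
  · intro i
    apply Measure.ext
    intro B hB
    rw [Measure.map_apply (measurable_XX μ e i) hB,
      Measure.restrict_apply ((measurable_XX μ e i) hB), XX_law μ e he i]

end RWC

lemma exists_rw {G : Type*} [Group G] [Countable G] [MeasurableSpace G]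
    [MeasurableSingletonClass G] (μ : Measure G) [IsProbabilityMeasure μ] :
    ∃ (P : Measure ℝ) (X : ℕ → ℝ → G), IsProbabilityMeasure P ∧ IsRW μ P X := by
  obtain ⟨e, he⟩ := exists_injective_nat G
  exact ⟨volume.restrict (Ico (0:ℝ) 1), RWC.XX μ e, RWC.restrict_prob, RWC.isRW μ e he⟩

section part2

variable {G : Type*} [Group G] [Countable G] [MeasurableSpace G] [MeasurableSingletonClass G]

lemma measG2 (s : Set G) : MeasurableSet s := (Set.to_countable s).measurableSet

lemma walk_succ {Ω : Type*} (X : ℕ → Ω → G) (ω : Ω) (n : ℕ) :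
    walk X ω (n + 1) = walk X ω n * X n ω := by
  rw [walk, walk, List.range_succ, List.map_append, List.prod_append]
  simp

lemma walk_measurable {Ω : Type*} [MeasurableSpace Ω] {X : ℕ → Ω → G}
    (hX : ∀ i, Measurable (X i)) (n : ℕ) : Measurable (fun ω => walk X ω n) := by
  induction n with
  | zero =>
    have : (fun ω : Ω => walk X ω 0) = fun _ => (1 : G) := by funext ω; simp [walk]
    rw [this]; exact measurable_const
  | succ n ih =>
    have : (fun ω : Ω => walk X ω (n+1)) = fun ω => walk X ω n * X n ω := by
      funext ω; exact walk_succ X ω n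
    rw [this]
    exact (measurable_of_countable (fun p : G × G => p.1 * p.2)).comp (ih.prodMk (hX n))

lemma walk_indep {Ω : Type*} [MeasurableSpace Ω] {P : Measure Ω} {μ : Measure G}
    {X : ℕ → Ω → G} (hX : IsRW μ P X) (n : ℕ) :
    IndepFun (fun ω => walk X ω n) (X n) P := by
  classical
  have h := hX.2.1.indepFun_finset (Finset.range n) {n}
    (by simp [Finset.disjoint_singleton_right]) hX.1
  set φ : ((i : (Finset.range n : Finset ℕ)) → G) → G :=
    fun v => ((List.range n).map (fun i =>
      if h : i ∈ Finset.range n then v ⟨i, h⟩ else 1)).prod with hφ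
  set ψ : ((i : ({n} : Finset ℕ)) → G) → G :=
    fun v => v ⟨n, Finset.mem_singleton_self n⟩ with hψ
  have h2 := h.comp (φ := φ) (ψ := ψ) (measurable_of_countable φ) (measurable_of_countable ψ)
  have hw : (fun ω => walk X ω n) = φ ∘ (fun a (i : (Finset.range n : Finset ℕ)) => X i a) := by
    funext ω
    simp only [Function.comp_apply, hφ, walk]
    congr 1
    apply List.map_congr_left
    intro i hi
    rw [dif_pos (Finset.mem_range.2 (List.mem_range.1 hi))]
  have hx : (X n) = ψ ∘ (fun a (i : ({n} : Finset ℕ)) => X i a) := rfl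
  rw [hw, hx]
  exact h2

lemma walk_pair_law {Ω : Type*} [MeasurableSpace Ω] {P : Measure Ω} [IsProbabilityMeasure P]
    {μ : Measure G} {X : ℕ → Ω → G} (hX : IsRW μ P X) (n : ℕ) :
    P.map (fun ω => (walk X ω n, X n ω)) = (P.map (fun ω => walk X ω n)).prod μ := by
  rw [← hX.2.2 n]
  exact (indepFun_iff_map_prod_eq_prod_map_map (walk_measurable hX.1 n).aemeasurable
    (hX.1 n).aemeasurable).1 (walk_indep hX n)

variable {M : Type*} [MetricSpace M] [CompactSpace M] [MeasurableSpace M] [BorelSpace M]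
  [MulAction G M]

lemma walk_integral (hc : ∀ g : G, Continuous (fun x : M => g • x))
    (μ : Measure G) [IsProbabilityMeasure μ]
    (ν : Measure M) [IsProbabilityMeasure ν] (hs : Stationary μ ν)
    {Ω : Type*} [MeasurableSpace Ω] {P : Measure Ω} [IsProbabilityMeasure P]
    {X : ℕ → Ω → G} (hX : IsRW μ P X) (f : BoundedContinuousFunction M ℝ) (n : ℕ) :
    ∫ ω, (∫ x, f (walk X ω n • x) ∂ν) ∂P = ∫ x, f x ∂ν := by
  set h : G → ℝ := fun a => ∫ x, f (a • x) ∂ν with hh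
  have hmatch : ∀ b : G, (∫ x, f (b • x) ∂ν) = h b := fun b => rfl
  have hbound : ∀ a, ‖h a‖ ≤ ‖f‖ := by
    intro a
    calc ‖h a‖ = ‖∫ x, f (a • x) ∂ν‖ := rfl
    _ ≤ ‖f‖ * (ν univ).toReal :=
        norm_integral_le_of_norm_le_const
          (Eventually.of_forall fun x => f.norm_coe_le_norm _)
    _ = ‖f‖ := by simp [measure_univ]
  have hint : ∀ (a : G) (ρ : Measure M), IsFiniteMeasure ρ → Integrable (fun x => f (a • x)) ρ := by
    intro a ρ hρ
    exact (f.compContinuous (⟨fun x => a • x, hc a⟩ : C(M, M))).integrable ρ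
  have hstat : ∀ a : G, ∫ g, h (a * g) ∂μ = h a := by
    intro a
    have hmap : ∀ g : G, ∫ x, f (a • x) ∂(Measure.map (fun x : M => g • x) ν)
        = ∫ x, f (a • (g • x)) ∂ν := by
      intro g
      have hcont : Continuous fun x : M => f (a • x) := f.continuous.comp (hc a)
      exact integral_map (μ := ν) (φ := fun x : M => g • x) (hc g).measurable.aemeasurable
        (f := fun x : M => f (a • x)) hcont.aestronglyMeasurable
    have h1 : h a = ∑' g : G, (μ {g}).toReal • ∫ x, f (a • (g • x)) ∂ν := by
      calc h a = ∫ x, f (a • x) ∂ν := rfl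
      _ = ∫ x, f (a • x) ∂(Measure.sum (fun g : G => μ {g} • Measure.map (fun x : M => g • x) ν)) := by
          rw [hs]
      _ = ∑' g : G, ∫ x, f (a • x) ∂(μ {g} • Measure.map (fun x : M => g • x) ν) :=
          integral_sum_measure (by rw [hs]; exact hint a ν inferInstance)
      _ = ∑' g : G, (μ {g}).toReal • ∫ x, f (a • x) ∂(Measure.map (fun x : M => g • x) ν) := by
          simp_rw [integral_smul_measure]
      _ = ∑' g : G, (μ {g}).toReal • ∫ x, f (a • (g • x)) ∂ν := by simp_rw [hmap]
    have h2 : ∫ g, h (a * g) ∂μ = ∑' g : G, (μ {g}).toReal • h (a * g) := by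
      apply integral_countable'
      apply Integrable.mono' (integrable_const ‖f‖)
      · exact (measurable_of_countable _).aestronglyMeasurable
      · exact Eventually.of_forall fun g => hbound (a * g)
    rw [h2, h1]
    congr 1
    funext g
    congr 1
    rw [hh]
    simp only [mul_smul]
  induction n with
  | zero =>
    have hw0 : ∀ ω : Ω, walk X ω 0 = 1 := fun ω => by simp [walk]
    simp only [hw0, one_smul]
    rw [integral_const]
    simp [measure_univ]
  | succ n ih =>
    haveI : IsProbabilityMeasure (P.map (fun ω => walk X ω n)) :=
      Measure.isProbabilityMeasure_map (walk_measurable hX.1 n).aemeasurable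
    have hintp : Integrable (fun p : G × G => h (p.1 * p.2))
        ((P.map (fun ω => walk X ω n)).prod μ) := by
      apply Integrable.mono' (integrable_const ‖f‖)
      · exact (measurable_of_countable _).aestronglyMeasurable
      · exact Eventually.of_forall fun p => hbound _
    calc ∫ ω, (∫ x, f (walk X ω (n+1) • x) ∂ν) ∂P
        = ∫ ω, h (walk X ω n * X n ω) ∂P := by
          simp_rw [hmatch, walk_succ]
      _ = ∫ p : G × G, h (p.1 * p.2) ∂(P.map (fun ω => (walk X ω n, X n ω))) := by
          rw [integral_map (((walk_measurable hX.1 n).prodMk (hX.1 n)).aemeasurable)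
            ((measurable_of_countable _).aestronglyMeasurable)]
      _ = ∫ p : G × G, h (p.1 * p.2) ∂((P.map (fun ω => walk X ω n)).prod μ) := by
          rw [walk_pair_law hX n]
      _ = ∫ a, (∫ g, h (a * g) ∂μ) ∂(P.map (fun ω => walk X ω n)) :=
          integral_prod _ hintp
      _ = ∫ a, h a ∂(P.map (fun ω => walk X ω n)) := by simp_rw [hstat]
      _ = ∫ ω, h (walk X ω n) ∂P := by
          rw [integral_map (walk_measurable hX.1 n).aemeasurable
            ((measurable_of_countable _).aestronglyMeasurable)]
      _ = ∫ x, f x ∂ν := by simp_rw [hmatch] at ih; exact ih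

end part2

section part3

variable {M : Type*} [MetricSpace M] [CompactSpace M] [MeasurableSpace M] [BorelSpace M]

noncomputable def absDiff (f : BoundedContinuousFunction M ℝ) (w : M) :
    BoundedContinuousFunction M ℝ :=
  BoundedContinuousFunction.mkOfCompact ⟨fun x => |f x - f w|, by continuity⟩

lemma absDiff_apply (f : BoundedContinuousFunction M ℝ) (w : M) (x : M) :
    absDiff f w x = |f x - f w| := rfl

lemma int_sub_const (ρ : Measure M) [IsProbabilityMeasure ρ]
    (f : BoundedContinuousFunction M ℝ) (w : M) :
    ∫ x, (f x - f w) ∂ρ = ∫ x, f x ∂ρ - f w := by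
  rw [integral_sub (f.integrable ρ) (integrable_const (f w)), integral_const]
  simp [measure_univ]

lemma abs_int_le (ρ : Measure M) (f : BoundedContinuousFunction M ℝ) (w : M) :
    |∫ x, (f x - f w) ∂ρ| ≤ ∫ x, |f x - f w| ∂ρ := by
  have h := norm_integral_le_integral_norm (μ := ρ) (fun x => f x - f w)
  simp only [Real.norm_eq_abs] at h
  exact h

lemma halving (ν₁ ν₂ : Measure M) [IsProbabilityMeasure ν₁] [IsProbabilityMeasure ν₂]
    (T : ℕ → M → M) (hT : ∀ i, Measurable (T i)) (w : M)
    (hconv : ∀ f : BoundedContinuousFunction M ℝ,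
      Tendsto (fun i => ∫ x, f x ∂(Measure.map (T i) ((2:ℝ≥0∞)⁻¹ • ν₁ + (2:ℝ≥0∞)⁻¹ • ν₂)))
        atTop (𝓝 (f w)))
    (f : BoundedContinuousFunction M ℝ) :
    Tendsto (fun i => ∫ x, f x ∂(Measure.map (T i) ν₁)) atTop (𝓝 (f w)) := by
  set g := absDiff f w with hg
  have hgw : g w = 0 := by rw [absDiff_apply]; simp
  have hgnn : ∀ x, 0 ≤ g x := fun x => abs_nonneg _
  have hgconv := hconv g
  rw [hgw] at hgconv
  have hmapeq : ∀ i, Measure.map (T i) ((2:ℝ≥0∞)⁻¹ • ν₁ + (2:ℝ≥0∞)⁻¹ • ν₂)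
      = (2:ℝ≥0∞)⁻¹ • Measure.map (T i) ν₁ + (2:ℝ≥0∞)⁻¹ • Measure.map (T i) ν₂ := by
    intro i
    rw [Measure.map_add _ _ (hT i), Measure.map_smul, Measure.map_smul]
  have hfin : ∀ (ρ : Measure M) [IsProbabilityMeasure ρ],
      IsFiniteMeasure ((2:ℝ≥0∞)⁻¹ • ρ) := by
    intro ρ hρ
    constructor
    rw [Measure.smul_apply, smul_eq_mul, measure_univ, mul_one]
    exact ENNReal.inv_lt_top.mpr (by norm_num)
  have key : ∀ i, dist (∫ x, f x ∂(Measure.map (T i) ν₁)) (f w)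
      ≤ 2 * ∫ x, g x ∂(Measure.map (T i) ((2:ℝ≥0∞)⁻¹ • ν₁ + (2:ℝ≥0∞)⁻¹ • ν₂)) := by
    intro i
    haveI hm1 : IsProbabilityMeasure (Measure.map (T i) ν₁) :=
      Measure.isProbabilityMeasure_map (hT i).aemeasurable
    haveI hm2 : IsProbabilityMeasure (Measure.map (T i) ν₂) :=
      Measure.isProbabilityMeasure_map (hT i).aemeasurable
    haveI := hfin (Measure.map (T i) ν₁)
    haveI := hfin (Measure.map (T i) ν₂)
    have hsub : ∫ x, (f x - f w) ∂(Measure.map (T i) ν₁)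
        = ∫ x, f x ∂(Measure.map (T i) ν₁) - f w := int_sub_const _ f w
    have hstep1 : dist (∫ x, f x ∂(Measure.map (T i) ν₁)) (f w)
        ≤ ∫ x, g x ∂(Measure.map (T i) ν₁) := by
      rw [Real.dist_eq, ← hsub]
      calc |∫ x, (f x - f w) ∂(Measure.map (T i) ν₁)|
          ≤ ∫ x, |f x - f w| ∂(Measure.map (T i) ν₁) := abs_int_le _ f w
        _ = ∫ x, g x ∂(Measure.map (T i) ν₁) := rfl
    have hdecomp : ∫ x, g x ∂(Measure.map (T i) ((2:ℝ≥0∞)⁻¹ • ν₁ + (2:ℝ≥0∞)⁻¹ • ν₂))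
        = (2:ℝ)⁻¹ * ∫ x, g x ∂(Measure.map (T i) ν₁)
          + (2:ℝ)⁻¹ * ∫ x, g x ∂(Measure.map (T i) ν₂) := by
      rw [hmapeq i, integral_add_measure (g.integrable _) (g.integrable _),
        integral_smul_measure, integral_smul_measure]
      norm_num
    have hnn2 : 0 ≤ ∫ x, g x ∂(Measure.map (T i) ν₂) :=
      integral_nonneg hgnn
    rw [hdecomp]
    linarith [hstep1]
  have hlim : Tendsto (fun i => dist (∫ x, f x ∂(Measure.map (T i) ν₁)) (f w)) atTop (𝓝 0) := by
    apply squeeze_zero (fun i => dist_nonneg) key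
    have := hgconv.const_mul (2:ℝ)
    simpa using this
  exact tendsto_iff_dist_tendsto_zero.2 hlim

end part3

lemma mix_stationary {G M : Type*} [Group G] [Countable G] [MeasurableSpace G]
    [MeasurableSingletonClass G] [MetricSpace M] [MeasurableSpace M] [BorelSpace M]
    [MulAction G M] (hc : ∀ g : G, Continuous (fun x : M => g • x)) (μ : Measure G)
    {ν₁ ν₂ : Measure M} (hs1 : Stationary μ ν₁) (hs2 : Stationary μ ν₂) :
    Stationary μ ((2:ℝ≥0∞)⁻¹ • ν₁ + (2:ℝ≥0∞)⁻¹ • ν₂) := by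
  have happ : ∀ (ν : Measure M), Stationary μ ν → ∀ s : Set M, MeasurableSet s →
      ∑' g : G, μ {g} * ν ((fun x : M => g • x) ⁻¹' s) = ν s := by
    intro ν hν s hm
    have h := congrArg (fun m : Measure M => m s) hν
    rw [Measure.sum_apply _ hm] at h
    simp_rw [Measure.smul_apply, smul_eq_mul,
      Measure.map_apply (hc _).measurable hm] at h
    exact h
  unfold Stationary
  apply Measure.ext
  intro s hm
  rw [Measure.sum_apply _ hm]
  simp_rw [Measure.smul_apply, smul_eq_mul, Measure.map_apply (hc _).measurable hm,
    Measure.add_apply, Measure.smul_apply, smul_eq_mul]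
  have hrw : ∀ g : G,
      μ {g} * ((2:ℝ≥0∞)⁻¹ * ν₁ ((fun x : M => g • x) ⁻¹' s)
        + (2:ℝ≥0∞)⁻¹ * ν₂ ((fun x : M => g • x) ⁻¹' s))
      = (2:ℝ≥0∞)⁻¹ * (μ {g} * ν₁ ((fun x : M => g • x) ⁻¹' s))
        + (2:ℝ≥0∞)⁻¹ * (μ {g} * ν₂ ((fun x : M => g • x) ⁻¹' s)) := by
    intro g; ring
  simp_rw [hrw]
  rw [ENNReal.tsum_add, ENNReal.tsum_mul_left, ENNReal.tsum_mul_left,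
    happ ν₁ hs1 s hm, happ ν₂ hs2 s hm]

/-- If a countable group `G` acts by homeomorphisms on a compact metric space `M` and `M` is
`μ`-proximal (every `μ`-stationary probability measure makes `(M, ν)` a `μ`-boundary), then
the `μ`-stationary Borel probability measure on `M` is unique. -/
theorem stationary_measure_unique {G M : Type*} [Group G] [Countable G] [MeasurableSpace G]
    [MeasurableSingletonClass G] [MetricSpace M] [CompactSpace M] [MeasurableSpace M]
    [BorelSpace M] [MulAction G M]
    (hc : ∀ g : G, Continuous (fun x : M => g • x))
    (μ : Measure G) [IsProbabilityMeasure μ]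
    (hprox : ∀ ν : Measure M, IsProbabilityMeasure ν → Stationary μ ν → MuBoundary μ ν)
    (ν₁ ν₂ : Measure M) (h1 : IsProbabilityMeasure ν₁) (h2 : IsProbabilityMeasure ν₂)
    (hs1 : Stationary μ ν₁) (hs2 : Stationary μ ν₂) : ν₁ = ν₂ := by
  haveI := h1
  haveI := h2
  haveI hne : Nonempty M := by
    by_contra hM
    rw [not_nonempty_iff] at hM
    have h0 := measure_univ (μ := ν₁)
    rw [Set.univ_eq_empty_iff.2 hM] at h0
    simp at h0
  haveI hνp : IsProbabilityMeasure ((2:ℝ≥0∞)⁻¹ • ν₁ + (2:ℝ≥0∞)⁻¹ • ν₂) := by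
    constructor
    simp [Measure.add_apply, Measure.smul_apply, measure_univ, ENNReal.inv_two_add_inv_two]
  have hνs : Stationary μ ((2:ℝ≥0∞)⁻¹ • ν₁ + (2:ℝ≥0∞)⁻¹ • ν₂) :=
    mix_stationary hc μ hs1 hs2
  obtain ⟨P, X, hP, hX⟩ := exists_rw μ
  haveI := hP
  have hbd := hprox ((2:ℝ≥0∞)⁻¹ • ν₁ + (2:ℝ≥0∞)⁻¹ • ν₂) hνp hνs ℝ inferInstance P hP X hX
  classical
  set W : ℝ → M := fun ω =>
    if h : ∃ w : M, TendstoPointMass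
        (fun i => Measure.map (fun x : M => walk X ω i • x)
          ((2:ℝ≥0∞)⁻¹ • ν₁ + (2:ℝ≥0∞)⁻¹ • ν₂)) w
    then h.choose else Classical.arbitrary M with hWdef
  have hW : ∀ᵐ ω ∂P, TendstoPointMass
      (fun i => Measure.map (fun x : M => walk X ω i • x)
        ((2:ℝ≥0∞)⁻¹ • ν₁ + (2:ℝ≥0∞)⁻¹ • ν₂)) (W ω) := by
    filter_upwards [hbd] with ω hω
    rw [hWdef]
    simp only
    rw [dif_pos hω]
    exact hω.choose_spec
  have main : ∀ (ρ : Measure M), IsProbabilityMeasure ρ → Stationary μ ρ →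
      (∀ᵐ ω ∂P, ∀ f : BoundedContinuousFunction M ℝ,
        Tendsto (fun i => ∫ x, f x ∂(Measure.map (fun x : M => walk X ω i • x) ρ)) atTop
          (𝓝 (f (W ω)))) →
      ∀ f : BoundedContinuousFunction M ℝ, ∫ x, f x ∂ρ = ∫ ω, f (W ω) ∂P := by
    intro ρ hρ hst hconv f
    haveI := hρ
    have hconst := walk_integral hc μ ρ hst hX f
    have hDCT : Tendsto (fun i => ∫ ω, (∫ x, f (walk X ω i • x) ∂ρ) ∂P) atTop
        (𝓝 (∫ ω, f (W ω) ∂P)) := by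
      apply tendsto_integral_of_dominated_convergence (fun _ => ‖f‖)
      · intro i
        exact ((measurable_of_countable (fun a : G => ∫ x, f (a • x) ∂ρ)).comp
          (walk_measurable hX.1 i)).aestronglyMeasurable
      · exact integrable_const _
      · intro i
        apply Eventually.of_forall
        intro ω
        calc ‖∫ x, f (walk X ω i • x) ∂ρ‖ ≤ ‖f‖ * (ρ univ).toReal :=
            norm_integral_le_of_norm_le_const
              (Eventually.of_forall fun x => f.norm_coe_le_norm _)
          _ = ‖f‖ := by simp [measure_univ]
      · filter_upwards [hconv] with ω hω
        have heq : ∀ i, ∫ x, f (walk X ω i • x) ∂ρ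
            = ∫ x, f x ∂(Measure.map (fun x : M => walk X ω i • x) ρ) := by
          intro i
          exact (integral_map ((hc _).measurable.aemeasurable)
            f.continuous.aestronglyMeasurable).symm
        simp_rw [heq]
        exact hω f
    rw [show (fun i => ∫ ω, (∫ x, f (walk X ω i • x) ∂ρ) ∂P)
      = (fun _ : ℕ => ∫ x, f x ∂ρ) from funext hconst] at hDCT
    exact tendsto_nhds_unique tendsto_const_nhds hDCT
  have hae1 : ∀ᵐ ω ∂P, ∀ f : BoundedContinuousFunction M ℝ,
      Tendsto (fun i => ∫ x, f x ∂(Measure.map (fun x : M => walk X ω i • x) ν₁)) atTop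
        (𝓝 (f (W ω))) := by
    filter_upwards [hW] with ω hω f
    exact halving ν₁ ν₂ (fun i => fun x : M => walk X ω i • x)
      (fun i => (hc _).measurable) (W ω) hω f
  have hswap : ((2:ℝ≥0∞)⁻¹ • ν₁ + (2:ℝ≥0∞)⁻¹ • ν₂ : Measure M)
      = (2:ℝ≥0∞)⁻¹ • ν₂ + (2:ℝ≥0∞)⁻¹ • ν₁ := add_comm _ _
  have hae2 : ∀ᵐ ω ∂P, ∀ f : BoundedContinuousFunction M ℝ,
      Tendsto (fun i => ∫ x, f x ∂(Measure.map (fun x : M => walk X ω i • x) ν₂)) atTop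
        (𝓝 (f (W ω))) := by
    filter_upwards [hW] with ω hω f
    rw [TendstoPointMass] at hω
    simp_rw [hswap] at hω
    exact halving ν₂ ν₁ (fun i => fun x : M => walk X ω i • x)
      (fun i => (hc _).measurable) (W ω) hω f
  have hfeq : ∀ f : BoundedContinuousFunction M ℝ, ∫ x, f x ∂ν₁ = ∫ x, f x ∂ν₂ :=
    fun f => (main ν₁ h1 hs1 hae1 f).trans (main ν₂ h2 hs2 hae2 f).symm
  apply ext_of_forall_lintegral_eq_of_IsFiniteMeasure
  intro f
  have hfr : Continuous fun x : M => ((f x : ℝ)) := NNReal.continuous_coe.comp f.continuous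
  set fr : BoundedContinuousFunction M ℝ :=
    BoundedContinuousFunction.mkOfCompact ⟨fun x => ((f x : ℝ)), hfr⟩ with hfrdef
  have hint1 : Integrable (fun x => ((f x : ℝ))) ν₁ := fr.integrable ν₁
  have hint2 : Integrable (fun x => ((f x : ℝ))) ν₂ := fr.integrable ν₂
  rw [lintegral_coe_eq_integral f hint1, lintegral_coe_eq_integral f hint2]
  congr 1
  exact hfeq fr
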